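/- arXiv:1410.8290 — 2 statements merged into one kernel-verified Lean document; each statement's English description precedes it below -/
import Mathlib

section
/- For the Benjamini–Hochberg step-up test with critical values α_{i:n} = (i/n)α under the Dirac-uniform configuration with n₀ true p-values i.i.d. uniform(0,1) and n−n₀ false p-values equal to 0, the expected number of falsely rejected hypotheses h(n₀, α) = E_DU(V | n₀) satisfies the recursion h(1, α) = α and h(n₀, α) = (n₀α/n)·(h(n₀−1, α) + n − n₀ + 1). -/
open MeasureTheory ProbabilityTheory Finset
open scoped Classical

/-- Number of rejections `R` of the step-up test with critical values `αc 1 ≤ … ≤ αc n`: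
`R = max{i ∈ {1,…,n} : p_{i:n} ≤ αc i} = max{i : #{j : p_j ≤ αc i} ≥ i}` (`0` if empty). -/
noncomputable def numRej {Ω ι : Type*} [Fintype ι] (n : ℕ) (αc : ℕ → ℝ)
    (q : ι → Ω → ℝ) (ω : Ω) : ℕ :=
  ((Finset.Icc 1 n).filter fun i =>
    i ≤ (Finset.univ.filter fun j => q j ω ≤ αc i).card).sup id

/-- Number `V` of falsely rejected true hypotheses: true `p`-values `≤ αc (max R 1)`
(with the convention `α_{0:n} = α_{1:n}`). -/
noncomputable def numFalseRej {Ω ι : Type*} [Fintype ι] (n : ℕ) (αc : ℕ → ℝ)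
    (q : ι → Ω → ℝ) (T : Finset ι) (ω : Ω) : ℕ :=
  (T.filter fun j => q j ω ≤ αc (max (numRej n αc q ω) 1)).card

/-- `E_DU(V | n₀)` for the Benjamini–Hochberg step-up test (`α_{i:n} = (i/n)·a`) under the
Dirac-uniform configuration: `n₀` true `p`-values are the i.i.d. uniform(0,1) coordinates,
the remaining `n − n₀` false `p`-values are identically `0`. -/
noncomputable def EDUBH (n n₀ : ℕ) (a : ℝ) : ℝ :=
  ∫ u : Fin n₀ → ℝ,
    (numFalseRej n (fun i => (i : ℝ) / n * a)
      (Sum.elim (fun (i : Fin n₀) (v : Fin n₀ → ℝ) => v i)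
        (fun (_ : Fin (n - n₀)) (_ : Fin n₀ → ℝ) => (0 : ℝ)))
      (Finset.univ.filter fun j : Fin n₀ ⊕ Fin (n - n₀) => j.isLeft = true) u : ℝ)
  ∂(Measure.pi fun _ : Fin n₀ => volume.restrict (Set.Ioo (0 : ℝ) 1))

/-- abstract step-up rejection count from counting function `N`. -/
noncomputable def supR (n : ℕ) (N : ℕ → ℕ) : ℕ :=
  ((Finset.Icc 1 n).filter fun i => i ≤ N i).sup id

theorem supR_le {n r : ℕ} {N : ℕ → ℕ} (h : ∀ i, 1 ≤ i → i ≤ n → i ≤ N i → i ≤ r) :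
    supR n N ≤ r := by
  refine Finset.sup_le fun i hi => ?_
  simp only [Finset.mem_filter, Finset.mem_Icc] at hi
  exact h i hi.1.1 hi.1.2 hi.2

theorem le_supR {n i : ℕ} {N : ℕ → ℕ} (h1 : 1 ≤ i) (h2 : i ≤ n) (h3 : i ≤ N i) :
    i ≤ supR n N := by
  refine Finset.le_sup (f := id) ?_
  simp only [Finset.mem_filter, Finset.mem_Icc]
  exact ⟨⟨h1, h2⟩, h3⟩

theorem supR_cases (n : ℕ) (N : ℕ → ℕ) :
    supR n N = 0 ∨ (1 ≤ supR n N ∧ supR n N ≤ n ∧ supR n N ≤ N (supR n N)) := by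
  rcases Finset.eq_empty_or_nonempty (((Finset.Icc 1 n).filter fun i => i ≤ N i)) with h | h
  · left; simp [supR, h]
  · right
    obtain ⟨i, hi, he⟩ := Finset.exists_mem_eq_sup _ h id
    have : supR n N = i := he
    simp only [Finset.mem_filter, Finset.mem_Icc] at hi
    rw [this]
    exact ⟨hi.1.1, hi.1.2, hi.2⟩

theorem supR_count {n : ℕ} {N : ℕ → ℕ} (hmono : Monotone N) (hub : ∀ i, N i ≤ n)
    (h1 : 1 ≤ N 1) (hn : 1 ≤ n) : N (supR n N) = supR n N := by
  have hR1 : 1 ≤ supR n N := le_supR le_rfl hn h1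
  rcases supR_cases n N with h | h
  · omega
  obtain ⟨-, hRn, hRN⟩ := h
  by_contra hne
  have hlt : supR n N < N (supR n N) := lt_of_le_of_ne hRN (Ne.symm hne)
  have : N (supR n N) ≤ supR n N :=
    le_supR (by omega) (hub _) (hmono (le_of_lt hlt))
  omega

theorem supR_shift {n : ℕ} {N₀ : ℕ → ℕ} (hmono : Monotone N₀) (hn : 1 ≤ n) :
    supR n (fun i => N₀ i + 1) = supR (n-1) (fun i => N₀ (i+1)) + 1 := by
  apply le_antisymm
  · refine supR_le fun i h1 h2 h3 => ?_
    rcases Nat.eq_or_lt_of_le h1 with h | h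
    · omega
    · have : i - 1 ≤ supR (n-1) (fun i => N₀ (i+1)) := by
        refine le_supR (by omega) (by omega) ?_
        have : i - 1 + 1 = i := by omega
        rw [this]; omega
      omega
  · rcases supR_cases (n-1) (fun i => N₀ (i+1)) with h | h
    · rw [h]
      exact le_supR le_rfl hn (by omega)
    · obtain ⟨h1, h2, h3⟩ := h
      refine le_supR (by omega) (by omega) ?_
      show _ ≤ N₀ _ + 1
      omega

theorem leave_one_out {n : ℕ} (hn : 1 ≤ n) (αc : ℕ → ℝ) (hα : Monotone αc)
    {N N' : ℕ → ℕ} (hN' : Monotone N') {x : ℝ}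
    (hrel : ∀ i, N i = N' i + (if x ≤ αc i then 1 else 0))
    (hub : ∀ i, N' i ≤ n - 1) :
    x ≤ αc (max (supR n N) 1) ↔ x ≤ αc (supR (n-1) (fun i => N' (i+1)) + 1) := by
  constructor
  · intro h
    rcases supR_cases n N with h0 | ⟨h1, h2, h3⟩
    · rw [h0] at h
      exact le_trans h (hα (by omega))
    · rw [max_eq_left h1] at h
      rcases Nat.eq_or_lt_of_le h1 with he | h2'
      · exact le_trans h (hα (by omega))
      · have hNR : N (supR n N) = N' (supR n N) + 1 := by rw [hrel _, if_pos h]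
        have hkey : supR n N - 1 ≤ supR (n-1) (fun i => N' (i+1)) := by
          refine le_supR (by omega) (by omega) ?_
          show _ ≤ N' (supR n N - 1 + 1)
          have he2 : supR n N - 1 + 1 = supR n N := by omega
          rw [he2]; omega
        exact le_trans h (hα (by omega))
  · intro h
    rcases supR_cases (n-1) (fun i => N' (i+1)) with h0 | ⟨h1, h2, h3⟩
    · rw [h0] at h
      exact le_trans h (hα (by omega))
    · have h3' : supR (n-1) (fun i => N' (i+1)) ≤ N' (supR (n-1) (fun i => N' (i+1)) + 1) := h3
      have hN : supR (n-1) (fun i => N' (i+1)) + 1 ≤ N (supR (n-1) (fun i => N' (i+1)) + 1) := by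
        rw [hrel _, if_pos h]; omega
      have hle : supR (n-1) (fun i => N' (i+1)) + 1 ≤ supR n N :=
        le_supR (by omega) (by omega) hN
      exact le_trans h (hα (by omega))

open scoped Classical

noncomputable def Bcnt {k : ℕ} (w : Fin k → ℝ) (t : ℝ) : ℕ :=
  (Finset.univ.filter fun j : Fin k => w j ≤ t).card

theorem Bcnt_le {k : ℕ} (w : Fin k → ℝ) (t : ℝ) : Bcnt w t ≤ k :=
  le_trans (Finset.card_filter_le _ _) (by simp)

theorem Bcnt_mono {k : ℕ} (w : Fin k → ℝ) : Monotone (Bcnt w) := by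
  intro s t hst
  apply Finset.card_le_card
  apply Finset.monotone_filter_right
  intro j _ hj
  exact le_trans hj hst

theorem Bcnt_succAbove {k : ℕ} (u : Fin (k+1) → ℝ) (j : Fin (k+1)) (t : ℝ) :
    Bcnt u t = Bcnt (u ∘ j.succAbove) t + (if u j ≤ t then 1 else 0) := by
  unfold Bcnt
  simp only [Finset.card_filter]
  rw [Fin.sum_univ_succAbove (fun i => if u i ≤ t then 1 else 0) j]
  simp [Function.comp, add_comm]

theorem count_sum_type {n₀ m : ℕ} (u : Fin n₀ → ℝ) {t : ℝ} (ht : 0 ≤ t) :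
    (Finset.univ.filter fun j : Fin n₀ ⊕ Fin m =>
      Sum.elim (fun (i : Fin n₀) (v : Fin n₀ → ℝ) => v i)
        (fun (_ : Fin m) (_ : Fin n₀ → ℝ) => (0 : ℝ)) j u ≤ t).card = Bcnt u t + m := by
  unfold Bcnt
  simp only [Finset.card_filter, Fintype.sum_sum_type, Sum.elim_inl, Sum.elim_inr]
  simp [ht]
  convert (Finset.card_filter _ _).symm
  exact if_congr Iff.rfl rfl rfl

theorem numRej_eq_supR {n n₀ m : ℕ} (a : ℝ) (ha : 0 ≤ a) (u : Fin n₀ → ℝ) :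
    numRej n (fun i => (i : ℝ) / n * a)
      (Sum.elim (fun (i : Fin n₀) (v : Fin n₀ → ℝ) => v i)
        (fun (_ : Fin m) (_ : Fin n₀ → ℝ) => (0 : ℝ))) u
    = supR n (fun i => Bcnt u ((i : ℝ) / n * a) + m) := by
  unfold numRej supR
  congr 1
  apply Finset.filter_congr
  intro i _
  rw [count_sum_type u (by positivity)]

theorem numFalseRej_eq_Bcnt {n n₀ m : ℕ} (αc : ℕ → ℝ) (u : Fin n₀ → ℝ)
    (q : Fin n₀ ⊕ Fin m → (Fin n₀ → ℝ) → ℝ)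
    (hq : ∀ i, q (Sum.inl i) = fun v => v i) :
    numFalseRej n αc q (Finset.univ.filter fun j : Fin n₀ ⊕ Fin m => j.isLeft = true) u
    = Bcnt u (αc (max (numRej n αc q u) 1)) := by
  unfold numFalseRej Bcnt
  rw [Finset.filter_filter, Finset.card_filter, Fintype.sum_sum_type, Finset.card_filter]
  simp [hq]

noncomputable def gfun (n m : ℕ) (a : ℝ) {k : ℕ} (w : Fin k → ℝ) : ℕ :=
  supR (n-1) (fun i => Bcnt w (((i+1 : ℕ) : ℝ) / n * a) + m)

theorem alpha_mono {n : ℕ} (hn : 0 < n) {a : ℝ} (ha : 0 ≤ a) :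
    Monotone (fun i : ℕ => (i : ℝ) / n * a) := by
  intro i j hij
  have hn' : (0:ℝ) < n := by exact_mod_cast hn
  have hij' : (i:ℝ) ≤ j := by exact_mod_cast hij
  have h2 : (0:ℝ) ≤ (n:ℝ)⁻¹ * a := by positivity
  calc (i:ℝ)/n*a = i * ((n:ℝ)⁻¹ * a) := by ring
    _ ≤ j * ((n:ℝ)⁻¹*a) := mul_le_mul_of_nonneg_right hij' h2
    _ = (j:ℝ)/n*a := by ring

theorem gfun_le {n m k : ℕ} (a : ℝ) (w : Fin k → ℝ) : gfun n m a w ≤ n - 1 :=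
  supR_le fun _ _ h2 _ => h2

theorem gfun_const {n : ℕ} (a : ℝ) (w : Fin 0 → ℝ) : gfun n (n-1) a w = n - 1 := by
  apply le_antisymm (gfun_le a w)
  rcases Nat.eq_zero_or_pos (n-1) with h | h
  · omega
  · refine le_supR h le_rfl ?_
    have : Bcnt w (((n-1+1 : ℕ) : ℝ) / n * a) = 0 := by
      simp [Bcnt, Finset.filter_eq_empty_iff]
    omega

/-- the shifted rejection count for the `(k, m+1)` configuration equals `gfun + 1`. -/
theorem supR_config {n m k : ℕ} (hn : 0 < n) {a : ℝ} (ha : 0 ≤ a) (w : Fin k → ℝ) :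
    supR n (fun i : ℕ => Bcnt w ((i : ℝ) / n * a) + (m + 1)) = gfun n m a w + 1 := by
  have hmono : Monotone (fun i : ℕ => Bcnt w ((i : ℝ) / n * a) + m) :=
    fun i j hij => by
      have := Bcnt_mono w (alpha_mono hn ha hij)
      dsimp only at this ⊢
      omega
  have := supR_shift (N₀ := fun i : ℕ => Bcnt w ((i : ℝ) / n * a) + m) hmono hn
  simpa [gfun, add_assoc] using this

theorem gfun_count {n m k : ℕ} (hn : n = k + 1 + m) {a : ℝ} (ha : 0 ≤ a) (w : Fin k → ℝ) :
    m ≤ gfun n m a w ∧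
    Bcnt w (((gfun n m a w + 1 : ℕ) : ℝ) / n * a) = gfun n m a w - m := by
  have hn0 : 0 < n := by omega
  have hmono : Monotone (fun i : ℕ => Bcnt w ((i : ℝ) / n * a) + (m + 1)) :=
    fun i j hij => by
      have := Bcnt_mono w (alpha_mono hn0 ha hij)
      dsimp only at this ⊢
      omega
  have hub : ∀ i : ℕ, Bcnt w ((i : ℝ) / n * a) + (m + 1) ≤ n := fun i => by
    have := Bcnt_le w ((i : ℝ) / n * a); omega
  have hcnt := supR_count hmono hub (by show 1 ≤ Bcnt w _ + (m+1); omega) (by omega)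
  rw [supR_config hn0 ha w] at hcnt
  have hcnt' : Bcnt w (((gfun n m a w + 1 : ℕ) : ℝ) / n * a) + (m + 1) = gfun n m a w + 1 := hcnt
  omega

/-- leave-one-out rewrite of the rejection event for coordinate `j`. -/
theorem rejected_iff {n m k : ℕ} (hn : n = k + 1 + m) {a : ℝ} (ha : 0 ≤ a)
    (u : Fin (k+1) → ℝ) (j : Fin (k+1)) :
    (u j ≤ (((max (numRej n (fun i => (i : ℝ) / n * a)
        (Sum.elim (fun (i : Fin (k+1)) (v : Fin (k+1) → ℝ) => v i)
          (fun (_ : Fin m) (_ : Fin (k+1) → ℝ) => (0 : ℝ))) u) 1 : ℕ) : ℝ) / n * a))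
    ↔ (u j ≤ ((gfun n m a (u ∘ j.succAbove) + 1 : ℕ) : ℝ) / n * a) := by
  have hn0 : 0 < n := by omega
  rw [numRej_eq_supR a ha u]
  have hrel : ∀ i : ℕ, Bcnt u ((i : ℝ) / n * a) + m
      = (Bcnt (u ∘ j.succAbove) ((i : ℝ) / n * a) + m)
        + (if u j ≤ (i : ℝ) / n * a then 1 else 0) := by
    intro i
    have := Bcnt_succAbove u j ((i : ℝ) / n * a)
    omega
  have hN'mono : Monotone (fun i : ℕ => Bcnt (u ∘ j.succAbove) ((i : ℝ) / n * a) + m) :=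
    fun i i' hii => by
      have := Bcnt_mono (u ∘ j.succAbove) (alpha_mono hn0 ha hii)
      dsimp only at this ⊢
      omega
  have hub : ∀ i : ℕ, Bcnt (u ∘ j.succAbove) ((i : ℝ) / n * a) + m ≤ n - 1 := fun i => by
    have := Bcnt_le (u ∘ j.succAbove) ((i : ℝ) / n * a); omega
  have := leave_one_out (n := n) (by omega) (fun i => (i : ℝ) / n * a) (alpha_mono hn0 ha)
    hN'mono (N := fun i : ℕ => Bcnt u ((i : ℝ) / n * a) + m) hrel hub
  rw [this]
  rfl

theorem measurable_of_countable_dom {α β : Type*} [MeasurableSpace α] [Countable α]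
    [MeasurableSingletonClass α] [MeasurableSpace β] (f : α → β) : Measurable f :=
  fun _ _ => (Set.to_countable _).measurableSet

theorem measurable_nat_op2 {α : Type*} [MeasurableSpace α] {f1 f2 : α → ℕ}
    (h1 : Measurable f1) (h2 : Measurable f2) (op : ℕ → ℕ → ℕ) :
    Measurable fun x => op (f1 x) (f2 x) :=
  (measurable_of_countable_dom (fun p : ℕ × ℕ => op p.1 p.2)).comp (h1.prodMk h2)

theorem measurable_finset_sum_nat {α ι : Type*} [MeasurableSpace α] (s : Finset ι)
    (F : ι → α → ℕ) (h : ∀ i, Measurable (F i)) :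
    Measurable fun x => ∑ i ∈ s, F i x := by
  classical
  induction s using Finset.induction with
  | empty => simpa using measurable_const
  | insert _ _ hnotmem ih =>
    simp only [Finset.sum_insert hnotmem]
    exact measurable_nat_op2 (h _) ih (· + ·)

theorem measurable_finset_sup_nat {α ι : Type*} [MeasurableSpace α] (s : Finset ι)
    (F : ι → α → ℕ) (h : ∀ i, Measurable (F i)) :
    Measurable fun x => s.sup (fun i => F i x) := by
  classical
  induction s using Finset.induction with
  | empty => simpa using measurable_const
  | insert _ _ hnotmem ih =>
    simp only [Finset.sup_insert]
    exact measurable_nat_op2 (h _) ih (· ⊔ ·)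

theorem measurable_Bcnt {k : ℕ} (t : ℝ) : Measurable fun w : Fin k → ℝ => Bcnt w t := by
  have : (fun w : Fin k → ℝ => Bcnt w t)
      = fun w => ∑ j : Fin k, if w j ≤ t then 1 else 0 := by
    funext w; unfold Bcnt; rw [Finset.card_filter]
  rw [this]
  refine measurable_finset_sum_nat _ _ fun j => ?_
  exact Measurable.ite (measurableSet_le (measurable_pi_apply j) measurable_const)
    measurable_const measurable_const

theorem sup_filter_eq_sup_ite (s : Finset ℕ) (p : ℕ → Prop) [DecidablePred p] :
    (s.filter p).sup id = s.sup (fun i => if p i then i else 0) := by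
  apply le_antisymm
  · refine Finset.sup_le fun i hi => ?_
    rw [Finset.mem_filter] at hi
    refine le_trans ?_ (Finset.le_sup hi.1)
    simp [hi.2]
  · refine Finset.sup_le fun i hi => ?_
    by_cases h : p i
    · simp only [h, if_true]
      exact Finset.le_sup (f := id) (Finset.mem_filter.2 ⟨hi, h⟩)
    · simp [h]

theorem measurable_gfun {n m k : ℕ} (a : ℝ) :
    Measurable fun w : Fin k → ℝ => gfun n m a w := by
  have : (fun w : Fin k → ℝ => gfun n m a w)
      = fun w => (Finset.Icc 1 (n-1)).sup
          (fun i => if i ≤ Bcnt w (((i+1 : ℕ) : ℝ) / n * a) + m then i else 0) := by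
    funext w
    unfold gfun supR
    rw [sup_filter_eq_sup_ite]
  rw [this]
  refine measurable_finset_sup_nat _ _ fun i => ?_
  exact (measurable_of_countable_dom
      (fun c : ℕ => if i ≤ c + m then i else 0)).comp (measurable_Bcnt _)

instance : IsProbabilityMeasure (volume.restrict (Set.Ioo (0:ℝ) 1)) := by
  constructor
  rw [Measure.restrict_apply_univ]
  simp

theorem integral_ite_le {c : ℝ} (h0 : 0 ≤ c) (h1 : c < 1) :
    ∫ x, (if x ≤ c then (1:ℝ) else 0) ∂(volume.restrict (Set.Ioo (0:ℝ) 1)) = c := by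
  have hfun : (fun x : ℝ => if x ≤ c then (1:ℝ) else 0)
      = (Set.Iic c).indicator (fun _ => 1) := by
    funext x; by_cases h : x ≤ c <;> simp [Set.indicator_apply, h]
  rw [hfun, integral_indicator_const (1:ℝ) measurableSet_Iic, measureReal_def,
    Measure.restrict_apply measurableSet_Iic]
  have : Set.Iic c ∩ Set.Ioo 0 1 = Set.Ioc 0 c := by
    ext x
    simp only [Set.mem_inter_iff, Set.mem_Iic, Set.mem_Ioo, Set.mem_Ioc]
    constructor
    · rintro ⟨h1', h2', _⟩; exact ⟨h2', h1'⟩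
    · rintro ⟨h1', h2'⟩; exact ⟨h2', h1', lt_of_le_of_lt h2' h1⟩
  rw [this, Real.volume_Ioc]
  simp [ENNReal.toReal_ofReal h0]

theorem integrable_ite_mem {α : Type*} [MeasurableSpace α] {μ : Measure α} [IsFiniteMeasure μ]
    {S : Set α} (hS : MeasurableSet S) :
    Integrable (fun x => if x ∈ S then (1:ℝ) else 0) μ := by
  have : (fun x => if x ∈ S then (1:ℝ) else 0) = S.indicator (fun _ => 1) := by
    funext x; simp [Set.indicator_apply]
  rw [this]
  exact (integrable_const 1).indicator hS

theorem integrable_nat_cast_bounded {α : Type*} [MeasurableSpace α] {μ : Measure α}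
    [IsFiniteMeasure μ] {f : α → ℕ} (hf : Measurable f) (C : ℕ) (hb : ∀ x, f x ≤ C) :
    Integrable (fun x => (f x : ℝ)) μ := by
  refine Integrable.mono' (integrable_const (C:ℝ)) ?_ ?_
  · exact ((measurable_of_countable_dom (fun r : ℕ => (r:ℝ))).comp hf).aestronglyMeasurable
  · refine Filter.Eventually.of_forall fun x => ?_
    rw [Real.norm_eq_abs, abs_of_nonneg (by positivity)]
    exact_mod_cast hb x

theorem measurable_succAboveComp {k : ℕ} (j : Fin (k+1)) :
    Measurable fun u : Fin (k+1) → ℝ => u ∘ j.succAbove :=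
  measurable_pi_iff.2 fun _ => measurable_pi_apply _

theorem M1 {n k : ℕ} (hk : k + 1 ≤ n) {a : ℝ} (ha0 : 0 < a) (ha1 : a < 1) :
    EDUBH n (k+1) a = ((k+1 : ℕ) : ℝ) * a / n *
      ((∫ w : Fin k → ℝ, (gfun n (n-(k+1)) a w : ℝ)
        ∂(Measure.pi fun _ : Fin k => volume.restrict (Set.Ioo (0:ℝ) 1))) + 1) := by
  have hn0 : 0 < n := by omega
  have hnR : (0:ℝ) < n := by exact_mod_cast hn0
  set μ0 : Measure ℝ := volume.restrict (Set.Ioo (0:ℝ) 1) with hμ0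
  set c : (Fin k → ℝ) → ℝ :=
    fun w => ((gfun n (n-(k+1)) a w : ℝ) + 1) / n * a with hc
  have hc_meas : Measurable c :=
    (measurable_of_countable_dom (fun r : ℕ => ((r : ℝ) + 1) / n * a)).comp
      (measurable_gfun a)
  have hc_nonneg : ∀ w, 0 ≤ c w := fun w => by
    rw [hc]; positivity
  have hc_lt : ∀ w, c w < 1 := fun w => by
    rw [hc]
    have h1' : gfun n (n-(k+1)) a w + 1 ≤ n := by
      have := gfun_le (n := n) (m := n-(k+1)) a w
      omega
    have h1 : ((gfun n (n-(k+1)) a w : ℝ) + 1) ≤ n := by exact_mod_cast h1'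
    have hd : ((gfun n (n-(k+1)) a w : ℝ) + 1) / n ≤ 1 := by
      rw [div_le_one hnR]; exact h1
    calc ((gfun n (n-(k+1)) a w : ℝ) + 1) / n * a ≤ 1 * a :=
          mul_le_mul_of_nonneg_right hd ha0.le
      _ = a := one_mul a
      _ < 1 := ha1
  -- pointwise rewrite of the integrand
  have hint : ∀ u : Fin (k+1) → ℝ,
      ((numFalseRej n (fun i => (i : ℝ) / n * a)
        (Sum.elim (fun (i : Fin (k+1)) (v : Fin (k+1) → ℝ) => v i)
          (fun (_ : Fin (n - (k+1))) (_ : Fin (k+1) → ℝ) => (0 : ℝ)))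
        (Finset.univ.filter fun j : Fin (k+1) ⊕ Fin (n - (k+1)) => j.isLeft = true) u : ℕ) : ℝ)
      = ∑ j : Fin (k+1), (if u j ≤ c (u ∘ j.succAbove) then (1:ℝ) else 0) := by
    intro u
    rw [numFalseRej_eq_Bcnt _ _ _ (fun i => rfl)]
    unfold Bcnt
    rw [Finset.card_filter, Nat.cast_sum]
    refine Finset.sum_congr rfl fun j _ => ?_
    have hiff := rejected_iff (n := n) (k := k) (m := n - (k+1)) (by omega) ha0.le u j
    push_cast at hiff ⊢
    simp only [hiff]
    rfl
  have hmeasS : ∀ j : Fin (k+1),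
      MeasurableSet {u : Fin (k+1) → ℝ | u j ≤ c (u ∘ j.succAbove)} :=
    fun j => measurableSet_le (measurable_pi_apply j) (hc_meas.comp (measurable_succAboveComp j))
  have hInt : ∀ j : Fin (k+1),
      Integrable (fun u : Fin (k+1) → ℝ => if u j ≤ c (u ∘ j.succAbove) then (1:ℝ) else 0)
        (Measure.pi fun _ : Fin (k+1) => μ0) :=
    fun j => integrable_ite_mem (hmeasS j)
  -- rewrite the integral
  unfold EDUBH
  rw [funext hint, integral_finset_sum _ (fun j _ => hInt j)]
  -- compute the integral for each j
  have hG : Integrable (fun w : Fin k → ℝ => (gfun n (n-(k+1)) a w : ℝ))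
      (Measure.pi fun _ : Fin k => μ0) :=
    integrable_nat_cast_bounded (measurable_gfun a) (n-1) (fun w => gfun_le a w)
  have hterm : ∀ j : Fin (k+1),
      (∫ u, (if u j ≤ c (u ∘ j.succAbove) then (1:ℝ) else 0)
        ∂(Measure.pi fun _ : Fin (k+1) => μ0))
      = a / n * ((∫ w : Fin k → ℝ, (gfun n (n-(k+1)) a w : ℝ)
          ∂(Measure.pi fun _ : Fin k => μ0)) + 1) := by
    intro j
    have mp := measurePreserving_piFinSuccAbove (fun _ : Fin (k+1) => μ0) j
    set F : ℝ × (Fin k → ℝ) → ℝ := fun p => if p.1 ≤ c p.2 then (1:ℝ) else 0 with hF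
    have hFmeas : MeasurableSet {p : ℝ × (Fin k → ℝ) | p.1 ≤ c p.2} :=
      measurableSet_le measurable_fst (hc_meas.comp measurable_snd)
    have hFint : Integrable F (μ0.prod (Measure.pi fun _ : Fin k => μ0)) :=
      integrable_ite_mem hFmeas
    have hcomp : (fun u : Fin (k+1) → ℝ => if u j ≤ c (u ∘ j.succAbove) then (1:ℝ) else 0)
        = fun u => F ((MeasurableEquiv.piFinSuccAbove (fun _ : Fin (k+1) => ℝ) j) u) := by
      funext u
      rfl
    rw [hcomp, mp.integral_comp' F, integral_prod_symm F hFint]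
    have hinner : ∀ w : Fin k → ℝ, (∫ x, F (x, w) ∂μ0) = c w := fun w =>
      integral_ite_le (hc_nonneg w) (hc_lt w)
    rw [funext hinner]
    have hcw : c = fun w : Fin k → ℝ => ((gfun n (n-(k+1)) a w : ℝ) + 1) * (a / n) := by
      rw [hc]
      funext w
      ring
    rw [hcw, integral_mul_const, integral_add hG (integrable_const 1), integral_const]
    simp [mul_comm]
  rw [Finset.sum_congr rfl (fun j _ => hterm j), Finset.sum_const]
  simp only [Finset.card_univ, Fintype.card_fin, nsmul_eq_mul]
  push_cast
  ring

theorem M2 {n k : ℕ} (hk : k + 1 ≤ n) {a : ℝ} (ha0 : 0 < a) :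
    EDUBH n k a = (∫ w : Fin k → ℝ, (gfun n (n-(k+1)) a w : ℝ)
        ∂(Measure.pi fun _ : Fin k => volume.restrict (Set.Ioo (0:ℝ) 1)))
      - ((n-(k+1) : ℕ) : ℝ) := by
  set μ0 : Measure ℝ := volume.restrict (Set.Ioo (0:ℝ) 1) with hμ0
  have hpt : ∀ w : Fin k → ℝ,
      ((numFalseRej n (fun i => (i : ℝ) / n * a)
        (Sum.elim (fun (i : Fin k) (v : Fin k → ℝ) => v i)
          (fun (_ : Fin (n - k)) (_ : Fin k → ℝ) => (0 : ℝ)))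
        (Finset.univ.filter fun j : Fin k ⊕ Fin (n - k) => j.isLeft = true) w : ℕ) : ℝ)
      = (gfun n (n-(k+1)) a w : ℝ) - ((n-(k+1) : ℕ) : ℝ) := by
    intro w
    rw [numFalseRej_eq_Bcnt _ _ _ (fun i => rfl)]
    rw [numRej_eq_supR a ha0.le w]
    have e1 : (fun i : ℕ => Bcnt w ((i : ℝ) / n * a) + (n - k))
        = fun i : ℕ => Bcnt w ((i : ℝ) / n * a) + ((n - (k+1)) + 1) := by
      funext i; omega
    rw [e1, supR_config (by omega) ha0.le w]
    rw [max_eq_left (by omega : 1 ≤ gfun n (n-(k+1)) a w + 1)]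
    have hcnt := (gfun_count (n := n) (m := n-(k+1)) (k := k) (by omega) ha0.le w).2
    have hm := (gfun_count (n := n) (m := n-(k+1)) (k := k) (by omega) ha0.le w).1
    rw [hcnt]
    push_cast [hm]
    ring
  unfold EDUBH
  rw [funext hpt]
  have hG : Integrable (fun w : Fin k → ℝ => (gfun n (n-(k+1)) a w : ℝ))
      (Measure.pi fun _ : Fin k => μ0) :=
    integrable_nat_cast_bounded (measurable_gfun a) (n-1) (fun w => gfun_le a w)
  rw [integral_sub hG (integrable_const _), integral_const]
  simp

theorem EDUBH_one {n : ℕ} (hn : 0 < n) {a : ℝ} (ha0 : 0 < a) (ha1 : a < 1) :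
    EDUBH n 1 a = a := by
  have h := M1 (n := n) (k := 0) (by omega) ha0 ha1
  have hg : ∀ w : Fin 0 → ℝ, (gfun n (n-(0+1)) a w : ℝ) = ((n-1 : ℕ) : ℝ) := by
    intro w
    have : n - (0+1) = n - 1 := by omega
    rw [this, gfun_const]
  rw [funext hg, integral_const] at h
  have hnR : (0:ℝ) < n := by exact_mod_cast hn
  rw [h]
  simp only [measure_univ, ENNReal.toReal_one, probReal_univ, one_smul]
  have : ((n-1 : ℕ) : ℝ) = (n:ℝ) - 1 := by
    push_cast [Nat.cast_sub hn]
    ring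
  rw [this]
  push_cast
  field_simp
  ring

/-- Recursion for the expected number of false rejections of the BH step-up test under the
Dirac-uniform configuration: `h(1,a) = a` and `h(n₀,a) = (n₀a/n)(h(n₀−1,a) + n − n₀ + 1)`. -/
theorem bh_du_recursion (n : ℕ) (hn : 0 < n) (a : ℝ) (ha0 : 0 < a) (ha1 : a < 1) :
    EDUBH n 1 a = a ∧
    ∀ n₀, 2 ≤ n₀ → n₀ ≤ n →
      EDUBH n n₀ a = (n₀ : ℝ) * a / n * (EDUBH n (n₀ - 1) a + (n : ℝ) - n₀ + 1) := by
  constructor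
  · exact EDUBH_one hn ha0 ha1
  · intro n₀ h2 hle
    obtain ⟨k, rfl⟩ : ∃ k, n₀ = k + 1 := ⟨n₀ - 1, by omega⟩
    have hM1 := M1 (n := n) (k := k) hle ha0 ha1
    have hM2 := M2 (n := n) (k := k) hle ha0
    have hk1 : k + 1 - 1 = k := by omega
    rw [hM1, hk1, hM2]
    have hsub : ((n - (k+1) : ℕ) : ℝ) = (n:ℝ) - ((k+1:ℕ):ℝ) := by
      exact Nat.cast_sub hle
    rw [hsub]
    push_cast
    ring
end

section
/- Suppose critical values 0 < α_{1:n} ≤ … ≤ α_{n:n} < 1 satisfy that j ↦ α_{j:n}/j is non-decreasing, and the step-up test satisfies FDR ≤ α for all distributions in the BI model with N = n₀ true i.i.d. uniform p-values (all choices of n₀ and false p-values). If the identity E(V/γ(R)) = n₀/n holds (γ(i) = nα_{i:n}), then α_{j:n} ≤ jα/(n+1−j) for all 1 ≤ j ≤ n. -/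
open MeasureTheory ProbabilityTheory Finset
open scoped Classical

lemma pi_cyl {n : ℕ} (ν : Measure ℝ) [IsProbabilityMeasure ν] {κ : Type*}
    (e : κ → Fin n) (he : Function.Injective e) (S : Finset κ) (sets : κ → Set ℝ) :
    (Measure.pi fun _ : Fin n => ν) (⋂ i ∈ S, (fun ω : Fin n → ℝ => ω (e i)) ⁻¹' sets i)
      = ∏ i ∈ S, ν (sets i) := by
  set sets'' : Fin n → Set ℝ := fun k => ⋂ i ∈ S.filter (fun i => e i = k), sets i with hs''
  have hset : (⋂ i ∈ S, (fun ω : Fin n → ℝ => ω (e i)) ⁻¹' sets i) = Set.pi Set.univ sets'' := by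
    ext ω
    simp only [Set.mem_iInter, Set.mem_preimage, Set.mem_pi, Set.mem_univ, true_implies,
      hs'', Finset.mem_filter]
    constructor
    · rintro h k i ⟨hi, rfl⟩; exact h i hi
    · intro h i hi; exact h (e i) i ⟨hi, rfl⟩
  rw [hset, Measure.pi_pi]
  have h1 : ∀ i ∈ S, sets'' (e i) = sets i := by
    intro i hi
    have : S.filter (fun i' => e i' = e i) = {i} := by
      ext x
      simp only [Finset.mem_filter, Finset.mem_singleton]
      constructor
      · rintro ⟨hx, hex⟩; exact he hex
      · rintro rfl; exact ⟨hi, rfl⟩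
    show (⋂ i' ∈ S.filter (fun i' => e i' = e i), sets i') = sets i
    rw [this]; simp
  have h2 : ∀ k, k ∉ S.image e → sets'' k = Set.univ := by
    intro k hk
    have : S.filter (fun i' => e i' = k) = ∅ := by
      rw [Finset.filter_eq_empty_iff]
      intro i hi hik
      exact hk (Finset.mem_image.mpr ⟨i, hi, hik⟩)
    show (⋂ i' ∈ S.filter (fun i' => e i' = k), sets i') = Set.univ
    rw [this]; simp
  rw [← Finset.prod_subset (Finset.subset_univ (S.image e))
    (fun k _ hk => by rw [h2 k hk]; exact measure_univ)]
  rw [Finset.prod_image (fun i hi i' hi' h => he h)]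
  exact Finset.prod_congr rfl fun i hi => by rw [h1 i hi]

lemma eval_marginal {n : ℕ} (ν : Measure ℝ) [IsProbabilityMeasure ν] (k : Fin n) (s : Set ℝ) :
    (Measure.pi fun _ : Fin n => ν) ((fun ω : Fin n → ℝ => ω k) ⁻¹' s) = ν s := by
  have := pi_cyl ν id (fun a b h => h) {k} (fun _ => s)
  simpa using this

lemma indepFun_const_right' {Ω β γ : Type*} [MeasurableSpace Ω] [MeasurableSpace β]
    [MeasurableSpace γ] (μ : Measure Ω) [IsProbabilityMeasure μ] (X : Ω → β) (c : γ) :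
    IndepFun X (fun _ => c) μ := by
  rw [indepFun_iff_measure_inter_preimage_eq_mul]
  intro s t _ _
  by_cases hc : c ∈ t
  · have h : (fun _ : Ω => c) ⁻¹' t = Set.univ := by ext; simp [hc]
    simp [h]
  · have h : (fun _ : Ω => c) ⁻¹' t = ∅ := by ext; simp [hc]
    simp [h]


lemma numRej_le {Ω ι : Type*} [Fintype ι] (n : ℕ) (αc : ℕ → ℝ)
    (q : ι → Ω → ℝ) (ω : Ω) : numRej n αc q ω ≤ n := by
  apply Finset.sup_le
  intro b hb
  exact (Finset.mem_Icc.mp (Finset.mem_filter.mp hb).1).2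

lemma measurable_numRej {Ω ι : Type*} [MeasurableSpace Ω] [Fintype ι] (n : ℕ) (hn : 0 < n)
    (αc : ℕ → ℝ) (q : ι → Ω → ℝ) (hq : ∀ j, Measurable (q j)) (T : Finset ι) :
    Measurable (fun ω => numRej n αc q ω) ∧
    Measurable (fun ω => numFalseRej n αc q T ω) := by
  set m : Ω → (Fin (n+1) → ι → ℕ) := fun ω i j => if q j ω ≤ αc i.val then 1 else 0 with hm'
  have hm : Measurable m := by
    apply measurable_pi_lambda
    intro i
    apply measurable_pi_lambda
    intro j
    exact Measurable.ite (measurableSet_le (hq j) measurable_const)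
      measurable_const measurable_const
  set F : (Fin (n+1) → ι → ℕ) → ℕ := fun v =>
    ((Finset.Icc 1 n).filter fun i =>
      i ≤ (Finset.univ.filter fun j => v ⟨min i n, by omega⟩ j = 1).card).sup id with hF'
  have hFkey : ∀ ω, numRej n αc q ω = F (m ω) := by
    intro ω
    unfold numRej
    congr 1
    apply Finset.filter_congr
    intro i hi
    have hin : i ≤ n := (Finset.mem_Icc.mp hi).2
    have : (min i n) = i := min_eq_left hin
    simp only [hF', hm', this]
    have hcc : (Finset.univ.filter fun j : ι => (if q j ω ≤ αc i then 1 else 0) = 1)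
        = (Finset.univ.filter fun j : ι => q j ω ≤ αc i) := by
      apply Finset.filter_congr
      intro j _
      constructor
      · intro h; by_contra hc; simp [hc] at h
      · intro h; simp [h]
    rw [hcc]
  set G : (Fin (n+1) → ι → ℕ) → ℕ := fun v =>
    (T.filter fun j => v ⟨min (max (F v) 1) n, by omega⟩ j = 1).card with hG'
  have hGkey : ∀ ω, numFalseRej n αc q T ω = G (m ω) := by
    intro ω
    unfold numFalseRej
    have h1 : max (numRej n αc q ω) 1 ≤ n := by
      have := numRej_le n αc q ω; omega
    have h2 : min (max (F (m ω)) 1) n = max (numRej n αc q ω) 1 := by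
      rw [← hFkey ω]; omega
    simp only [hG', hm', h2]
    congr 1
    apply Finset.filter_congr
    intro j _
    constructor
    · intro h
      have h2' : min (max (F fun i j => if q j ω ≤ αc ↑i then 1 else 0) 1) n = max (numRej n αc q ω) 1 := h2
      simp [h2', h]
    · intro h; by_contra hc
      have h2' : min (max (F fun i j => if q j ω ≤ αc ↑i then 1 else 0) 1) n = max (numRej n αc q ω) 1 := h2
      simp [h2', hc] at h
  constructor
  · have : (fun ω => numRej n αc q ω) = F ∘ m := funext hFkey
    rw [this]; exact (measurable_of_countable F).comp hm
  · have : (fun ω => numFalseRej n αc q T ω) = G ∘ m := funext hGkey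
    rw [this]; exact (measurable_of_countable G).comp hm

/-- Necessary condition: if `j ↦ α_{j:n}/j` is non-decreasing and the step-up test controls
`FDR ≤ a` in every BI model (in which also the identity `E(V/γ(R)) = n₀/n` holds), then
`α_{j:n} ≤ jα/(n+1−j)` for all `1 ≤ j ≤ n`. -/
theorem necessary_condition_critical_values
    (n : ℕ) (hn : 0 < n) (a : ℝ) (ha0 : 0 < a) (ha1 : a < 1)
    (αc : ℕ → ℝ) (hpos : 0 < αc 1) (hlt : αc n < 1)
    (hmono : ∀ i j, 1 ≤ i → i ≤ j → j ≤ n → αc i ≤ αc j)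
    (hratio : ∀ i j, 1 ≤ i → i ≤ j → j ≤ n → αc i / i ≤ αc j / j)
    (hall : ∀ (Ω : Type) (_ : MeasurableSpace Ω) (μ : Measure Ω),
      IsProbabilityMeasure μ →
      ∀ (q : Fin n → Ω → ℝ), (∀ j, Measurable (q j)) →
      ∀ (T : Finset (Fin n)) (n₀ : ℕ), T.card = n₀ →
      (∀ i ∈ T, μ.map (q i) = volume.restrict (Set.Ioo 0 1)) →
      iIndepFun
        (fun i : {j : Fin n // j ∈ T} => q i) μ →
      IndepFun (fun ω (i : {j : Fin n // j ∈ T}) => q i ω)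
        (fun ω (j : {j : Fin n // j ∉ T}) => q j ω) μ →
      (∫ ω, (numFalseRej n αc q T ω : ℝ) / (numRej n αc q ω : ℝ) ∂μ ≤ a) ∧
      (∫ ω, (numFalseRej n αc q T ω : ℝ)
          / ((n : ℝ) * αc (max (numRej n αc q ω) 1)) ∂μ = (n₀ : ℝ) / n)) :
    ∀ j, 1 ≤ j → j ≤ n → αc j ≤ (j : ℝ) * a / ((n : ℝ) + 1 - j) := by
  intro j hj1 hjn
  -- positivity of the critical values
  have hαpos : ∀ i, 1 ≤ i → i ≤ n → 0 < αc i := fun i h1 h2 =>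
    lt_of_lt_of_le hpos (hmono 1 i le_rfl h1 h2)
  -- the uniform measure on (0,1)
  set ν : Measure ℝ := volume.restrict (Set.Ioo 0 1) with hν'
  have hν : IsProbabilityMeasure ν := by
    constructor
    rw [hν', Measure.restrict_apply MeasurableSet.univ, Set.univ_inter, Real.volume_Ioo]
    norm_num
  set μ : Measure (Fin n → ℝ) := Measure.pi fun _ => ν with hμ'
  have hμ : IsProbabilityMeasure μ := by rw [hμ']; infer_instance
  -- the true-hypothesis set T of cardinality n+1-j
  obtain ⟨T, -, hTcard⟩ := Finset.exists_subset_card_eq (s := (Finset.univ : Finset (Fin n))) (n := n + 1 - j)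
    (by rw [Finset.card_univ, Fintype.card_fin]; omega)
  -- the p-values: uniform on T, Dirac at 0 off T
  set q : Fin n → (Fin n → ℝ) → ℝ := fun i ω => if i ∈ T then ω i else 0 with hq'
  have hq : ∀ i, Measurable (q i) := by
    intro i
    by_cases hi : i ∈ T
    · simpa [hq', hi] using measurable_pi_apply i
    · simpa [hq', hi] using measurable_const
  have hqT : ∀ i : Fin n, i ∈ T → q i = fun ω => ω i := by
    intro i hi; funext ω; simp [hq', hi]
  -- marginals
  have hmap : ∀ i ∈ T, μ.map (q i) = ν := by
    intro i hi
    apply Measure.ext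
    intro s hs
    rw [Measure.map_apply (hq i) hs, hqT i hi, hμ', eval_marginal]
  -- independence of the true p-values
  have hiIndep : iIndepFun
      (fun i : {j : Fin n // j ∈ T} => q i) μ := by
    rw [iIndepFun_iff_measure_inter_preimage_eq_mul]
    intro S sets hsets
    have he : ∀ i : {j : Fin n // j ∈ T}, q i = fun ω : Fin n → ℝ => ω i.val :=
      fun i => hqT i.val i.2
    calc μ (⋂ i ∈ S, q i ⁻¹' sets i)
        = μ (⋂ i ∈ S, (fun ω : Fin n → ℝ => ω i.val) ⁻¹' sets i) := by
          congr 1; apply Set.iInter₂_congr; intro i _; rw [he i]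
      _ = ∏ i ∈ S, ν (sets i) := pi_cyl ν Subtype.val Subtype.val_injective S sets
      _ = ∏ i ∈ S, μ (q i ⁻¹' sets i) := by
          apply Finset.prod_congr rfl
          intro i _
          rw [he i, hμ', eval_marginal]
  -- independence of true and false p-values
  have hIndep : IndepFun (fun ω (i : {j : Fin n // j ∈ T}) => q i ω)
      (fun ω (j : {j : Fin n // j ∉ T}) => q j ω) μ := by
    have : (fun ω (j' : {j' : Fin n // j' ∉ T}) => q j' ω)
        = fun _ => (fun _ : {j' : Fin n // j' ∉ T} => (0 : ℝ)) := by
      funext ω j'; simp [hq', j'.2]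
    rw [this]
    exact indepFun_const_right' μ _ _
  obtain ⟨hFDR, hId⟩ := hall (Fin n → ℝ) inferInstance μ hμ q hq T (n + 1 - j) hTcard hmap
    hiIndep hIndep
  -- abbreviations
  set R : (Fin n → ℝ) → ℕ := fun ω => numRej n αc q ω with hR'
  set V : (Fin n → ℝ) → ℕ := fun ω => numFalseRej n αc q T ω with hV'
  -- main pointwise fact : V > 0 → j ≤ R
  have hVR : ∀ ω, 0 < V ω → j ≤ R ω := by
    intro ω hV0
    by_contra hR0
    push_neg at hR0
    obtain ⟨t, ht⟩ := Finset.card_pos.mp hV0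
    obtain ⟨htT, htq⟩ := Finset.mem_filter.mp ht
    have hmle : max (numRej n αc q ω) 1 ≤ j := by
      have : numRej n αc q ω < j := hR0
      omega
    have hα : αc (max (numRej n αc q ω) 1) ≤ αc j :=
      hmono _ j (le_max_right _ 1) hmle hjn
    have hsub : insert t Tᶜ ⊆ Finset.univ.filter fun i => q i ω ≤ αc j := by
      intro x hx
      rw [Finset.mem_insert] at hx
      rw [Finset.mem_filter]
      refine ⟨Finset.mem_univ x, ?_⟩
      rcases hx with rfl | hx
      · exact le_trans htq hα
      · have : x ∉ T := Finset.mem_compl.mp hx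
        simp only [hq', this, if_false]
        exact le_of_lt (hαpos j hj1 hjn)
    have hcard : (insert t Tᶜ).card = j := by
      rw [Finset.card_insert_of_notMem (by simp [htT]), Finset.card_compl, hTcard,
        Fintype.card_fin]
      omega
    have hjle : j ≤ (Finset.univ.filter fun i => q i ω ≤ αc j).card := by
      have := Finset.card_le_card hsub
      omega
    have hmem : j ∈ (Finset.Icc 1 n).filter fun i =>
        i ≤ (Finset.univ.filter fun i' => q i' ω ≤ αc i).card :=
      Finset.mem_filter.mpr ⟨Finset.mem_Icc.mpr ⟨hj1, hjn⟩, hjle⟩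
    have : j ≤ numRej n αc q ω := Finset.le_sup (f := id) hmem
    have hh : R ω = numRej n αc q ω := rfl
    omega
  -- pointwise inequality
  have hptwise : ∀ ω, ((n : ℝ) * αc j / j) * ((V ω : ℝ) / ((n : ℝ) * αc (max (R ω) 1)))
      ≤ (V ω : ℝ) / (R ω : ℝ) := by
    intro ω
    rcases Nat.eq_zero_or_pos (V ω) with h0 | hV0
    · simp [h0]
    · have hjR := hVR ω hV0
      have hRn := numRej_le n αc q ω
      have hR1 : max (R ω) 1 = R ω := max_eq_left (le_trans hj1 hjR)
      rw [hR1]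
      have hRpos : 0 < R ω := lt_of_lt_of_le (lt_of_lt_of_le Nat.zero_lt_one hj1) hjR
      have hαR : 0 < αc (R ω) := hαpos _ (le_trans hj1 hjR) hRn
      have hαj : 0 < αc j := hαpos j hj1 hjn
      have hrat := hratio j (R ω) hj1 hjR hRn
      have hjpos : (0:ℝ) < (j:ℝ) := by exact_mod_cast lt_of_lt_of_le Nat.zero_lt_one hj1
      have hRpos' : (0:ℝ) < (R ω : ℝ) := by exact_mod_cast hRpos
      have hnpos : (0:ℝ) < (n:ℝ) := by exact_mod_cast hn
      have hVnn : (0:ℝ) ≤ (V ω : ℝ) := Nat.cast_nonneg _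
      have key : αc j * (R ω : ℝ) ≤ αc (R ω) * (j : ℝ) :=
        (div_le_div_iff₀ hjpos hRpos').mp hrat
      have heq : ((n : ℝ) * αc j / j) * ((V ω : ℝ) / ((n : ℝ) * αc (R ω)))
          = (αc j * (V ω : ℝ)) / ((j : ℝ) * αc (R ω)) := by
        field_simp
      rw [heq, div_le_div_iff₀ (by positivity) hRpos']
      nlinarith [mul_le_mul_of_nonneg_left key hVnn]
  -- integrability of V/R
  obtain ⟨hmR, hmV⟩ := measurable_numRej n hn αc q hq T
  have hmf : Measurable (fun ω => (V ω : ℝ) / (R ω : ℝ)) := by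
    have : (fun ω => (V ω : ℝ) / (R ω : ℝ))
        = (fun p : ℕ × ℕ => (p.1 : ℝ) / (p.2 : ℝ)) ∘ (fun ω => (V ω, R ω)) := rfl
    rw [this]
    exact (measurable_of_countable _).comp (hmV.prodMk hmR)
  have hVn : ∀ ω, V ω ≤ n := by
    intro ω
    calc V ω ≤ T.card := Finset.card_filter_le _ _
      _ ≤ n := by rw [hTcard]; omega
  have hbound : ∀ ω, ‖(V ω : ℝ) / (R ω : ℝ)‖ ≤ (n : ℝ) := by
    intro ω
    rw [Real.norm_eq_abs, abs_of_nonneg (by positivity)]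
    rcases Nat.eq_zero_or_pos (R ω) with h0 | hR0
    · simp [h0]
    · have h1 : (1:ℝ) ≤ (R ω : ℝ) := by exact_mod_cast hR0
      calc (V ω : ℝ) / (R ω : ℝ) ≤ (V ω : ℝ) := div_le_self (Nat.cast_nonneg _) h1
        _ ≤ (n : ℝ) := by exact_mod_cast hVn ω
  have hint : Integrable (fun ω => (V ω : ℝ) / (R ω : ℝ)) μ :=
    (integrable_const (n : ℝ)).mono' hmf.aestronglyMeasurable
      (Filter.Eventually.of_forall hbound)
  -- put the integrals together
  set c : ℝ := (n : ℝ) * αc j / j with hc'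
  have hcpos : 0 < c := by
    rw [hc']
    have := hαpos j hj1 hjn
    positivity
  have hgnn : ∀ ω, 0 ≤ (V ω : ℝ) / ((n : ℝ) * αc (max (R ω) 1)) := by
    intro ω
    have h1 : 1 ≤ max (R ω) 1 := le_max_right _ _
    have h2 : max (R ω) 1 ≤ n := by
      have hh : R ω ≤ n := numRej_le n αc q ω
      omega
    have := hαpos _ h1 h2
    positivity
  have hstep : ∫ ω, c * ((V ω : ℝ) / ((n : ℝ) * αc (max (R ω) 1))) ∂μ
      ≤ ∫ ω, (V ω : ℝ) / (R ω : ℝ) ∂μ := by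
    apply integral_mono_of_nonneg
    · exact Filter.Eventually.of_forall fun ω => mul_nonneg hcpos.le (hgnn ω)
    · exact hint
    · exact Filter.Eventually.of_forall hptwise
  rw [integral_const_mul] at hstep
  have hId' : ∫ ω, (V ω : ℝ) / ((n : ℝ) * αc (max (R ω) 1)) ∂μ = ((n + 1 - j : ℕ) : ℝ) / n := hId
  rw [hId'] at hstep
  have hcast : ((n + 1 - j : ℕ) : ℝ) = (n : ℝ) + 1 - (j : ℝ) := by
    rw [Nat.cast_sub (by omega)]
    push_cast
    ring
  rw [hcast] at hstep
  have hfinal : c * (((n : ℝ) + 1 - j) / n) ≤ a := le_trans hstep hFDR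
  -- arithmetic wrap-up
  have hnpos : (0:ℝ) < (n:ℝ) := by exact_mod_cast hn
  have hjpos : (0:ℝ) < (j:ℝ) := by exact_mod_cast lt_of_lt_of_le Nat.zero_lt_one hj1
  have htpos : (0:ℝ) < (n : ℝ) + 1 - j := by
    have : (j:ℝ) ≤ (n:ℝ) := by exact_mod_cast hjn
    linarith
  rw [hc'] at hfinal
  rw [le_div_iff₀ htpos]
  have : (n : ℝ) * αc j / j * (((n:ℝ) + 1 - j) / n) = αc j * ((n:ℝ) + 1 - j) / j := by
    field_simp
  rw [this] at hfinal
  rw [div_le_iff₀ hjpos] at hfinal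
  linarith
end
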